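/- Let G, γ : [0, T) → ℝ be continuous with γ absolutely continuous, and suppose there are constants C ≥ 1, n ≥ 1 with γ(0) ≥ 10000 n C², G(0) < 100C, |γ'(τ) - 1| ≤ 4nC G(τ)/γ(τ) a.e., and G'(τ) ≤ (-1/10 + 2C/γ(τ)) G(τ) + C + 8nC G(τ)² (1/γ(τ) + 1/γ(τ)²) a.e. Then for all τ ∈ [0, T), G(τ) < 100C and γ(τ) ≥ γ(0). -/

import Mathlib

open MeasureTheory
open Filter Topology

set_option maxHeartbeats 1000000 in
lemma aux_gbound (C m Gv x : ℝ) (hC : 1 ≤ C) (hm : 1 ≤ m)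
    (h99 : 99*C ≤ Gv) (h101 : Gv ≤ 101*C) (hx : 9999*m*C^2 ≤ x) :
    (-1/10 + 2*C/x)*Gv + C + 8*m*C*Gv^2*(1/x + 1/x^2) ≤ -C/2 := by
  have hC0 : (0:ℝ) < C := by linarith
  have h1 : (1:ℝ) ≤ m*C^2 := by nlinarith
  have hx9 : (9999:ℝ) ≤ x := by nlinarith
  have hx0 : (0:ℝ) < x := by linarith
  have key : (-1/10 + 2*C/x)*Gv + C + 8*m*C*Gv^2*(1/x + 1/x^2)
      = ((-1/10)*Gv*x^2 + 2*C*Gv*x + C*x^2 + 8*m*C*Gv^2*(x+1))/x^2 := by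
    field_simp
  rw [key, div_le_iff₀ (pow_pos hx0 2)]
  have hGv2 : Gv^2 ≤ 10201*C^2 := by nlinarith
  have hmC2 : m*C^2 ≤ x/9999 := by linarith
  have hu : (0:ℝ) < C*x^2 := by positivity
  have e1 : (-1/10)*Gv*x^2 ≤ -(99/10)*(C*x^2) := by nlinarith [sq_nonneg x]
  have e2a : 2*C*Gv*x ≤ 202*((m*C^2)*x) := by
    nlinarith [mul_nonneg (mul_nonneg hC0.le hx0.le) (sub_nonneg.mpr h101),
      mul_nonneg (mul_nonneg (sub_nonneg.mpr hm) (mul_nonneg hC0.le hC0.le)) hx0.le]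
  have e2b : (m*C^2)*x ≤ (1/9999)*(C*x^2) := by
    nlinarith [mul_nonneg (sub_nonneg.mpr hmC2) hx0.le,
      mul_nonneg (mul_nonneg (sub_nonneg.mpr hC) hx0.le) hx0.le]
  have e3a : 8*m*C*Gv^2 ≤ 81608*((m*C^2)*C) := by
    nlinarith [mul_nonneg (mul_nonneg (by linarith : (0:ℝ) ≤ 8*m) hC0.le) (sub_nonneg.mpr hGv2)]
  have e3b : (m*C^2)*C ≤ (1/9999)*(C*x) := by
    nlinarith [mul_nonneg (sub_nonneg.mpr hmC2) hC0.le]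
  have e3c : 8*m*C*Gv^2 ≤ (81608/9999)*(C*x) := by linarith
  have e3x : 8*m*C*Gv^2*x ≤ (81608/9999)*(C*x^2) :=
    calc 8*m*C*Gv^2*x ≤ (81608/9999)*(C*x)*x := mul_le_mul_of_nonneg_right e3c hx0.le
      _ = (81608/9999)*(C*x^2) := by ring
  have e5 : C*x ≤ (1/9999)*(C*x^2) := by nlinarith
  nlinarith [hu]

lemma aux_gamma' (C m Gv x d : ℝ) (hC : 1 ≤ C) (hm : 1 ≤ m)
    (h101 : Gv ≤ 101*C) (hx : 9999*m*C^2 ≤ x) (hd : |d - 1| ≤ 4*m*C*Gv/x) : 0 ≤ d := by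
  have hC0 : (0:ℝ) < C := by linarith
  have h1 : (1:ℝ) ≤ m*C^2 := by nlinarith
  have hx0 : (0:ℝ) < x := by nlinarith
  have h2 : 4*m*C*Gv/x ≤ 1/2 := by
    rw [div_le_iff₀ hx0]
    nlinarith
  have := abs_le.mp (hd.trans h2)
  linarith [this.1]

/-- Bootstrap lemma: if `γ(0) ≥ 10000 n C²`, `G(0) < 100C`, `|γ' - 1| ≤ 4nC G/γ` a.e. and
`G' ≤ (-1/10 + 2C/γ)G + C + 8nC G²(1/γ + 1/γ²)` a.e., then for all `τ ∈ [0, T)`,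
`G(τ) < 100C` and `γ(τ) ≥ γ(0)`. Absolute continuity is encoded by the integral
representations of `G` and `γ`. -/
theorem bootstrap_lemma (T : ℝ) (G γ g γ' : ℝ → ℝ) (C : ℝ) (n : ℕ)
    (hC : 1 ≤ C) (hn : 1 ≤ n)
    (hGcont : ContinuousOn G (Set.Ico 0 T))
    (hγcont : ContinuousOn γ (Set.Ico 0 T))
    (hγAC : ∀ τ ∈ Set.Ico (0 : ℝ) T, γ τ = γ 0 + ∫ s in (0 : ℝ)..τ, γ' s)
    (hGAC : ∀ τ ∈ Set.Ico (0 : ℝ) T, G τ = G 0 + ∫ s in (0 : ℝ)..τ, g s)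
    (hγint : ∀ τ ∈ Set.Ico (0 : ℝ) T, IntervalIntegrable γ' volume 0 τ)
    (hGint : ∀ τ ∈ Set.Ico (0 : ℝ) T, IntervalIntegrable g volume 0 τ)
    (hγ0 : γ 0 ≥ 10000 * n * C ^ 2)
    (hG0 : G 0 < 100 * C)
    (hγ' : ∀ᵐ τ, τ ∈ Set.Ico (0 : ℝ) T →
      |γ' τ - 1| ≤ 4 * n * C * G τ / γ τ)
    (hg : ∀ᵐ τ, τ ∈ Set.Ico (0 : ℝ) T →
      g τ ≤ (-1 / 10 + 2 * C / γ τ) * G τ + C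
        + 8 * n * C * (G τ) ^ 2 * (1 / γ τ + 1 / (γ τ) ^ 2)) :
    ∀ τ ∈ Set.Ico (0 : ℝ) T, G τ < 100 * C ∧ γ 0 ≤ γ τ := by
  have hC0 : (0:ℝ) < C := by linarith
  have hm : (1:ℝ) ≤ (n:ℝ) := by exact_mod_cast hn
  have h1 : (1:ℝ) ≤ (n:ℝ)*C^2 := by nlinarith
  -- integral representations of differences
  have hdiffG : ∀ a b : ℝ, 0 ≤ a → a ≤ b → b < T → G b = G a + ∫ s in a..b, g s := by
    intro a b ha hab hbT
    have hamem : a ∈ Set.Ico (0:ℝ) T := ⟨ha, lt_of_le_of_lt hab hbT⟩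
    have hbmem : b ∈ Set.Ico (0:ℝ) T := ⟨ha.trans hab, hbT⟩
    have hia : IntervalIntegrable g volume 0 a := hGint a hamem
    have hiab : IntervalIntegrable g volume a b :=
      (hGint b hbmem).mono_set
        (Set.uIcc_subset_uIcc (Set.mem_uIcc.mpr (Or.inl ⟨ha, hab⟩)) Set.right_mem_uIcc)
    have hadd := intervalIntegral.integral_add_adjacent_intervals hia hiab
    rw [hGAC a hamem, hGAC b hbmem, ← hadd]
    ring
  have hdiffγ : ∀ a b : ℝ, 0 ≤ a → a ≤ b → b < T → γ b = γ a + ∫ s in a..b, γ' s := by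
    intro a b ha hab hbT
    have hamem : a ∈ Set.Ico (0:ℝ) T := ⟨ha, lt_of_le_of_lt hab hbT⟩
    have hbmem : b ∈ Set.Ico (0:ℝ) T := ⟨ha.trans hab, hbT⟩
    have hia : IntervalIntegrable γ' volume 0 a := hγint a hamem
    have hiab : IntervalIntegrable γ' volume a b :=
      (hγint b hbmem).mono_set
        (Set.uIcc_subset_uIcc (Set.mem_uIcc.mpr (Or.inl ⟨ha, hab⟩)) Set.right_mem_uIcc)
    have hadd := intervalIntegral.integral_add_adjacent_intervals hia hiab
    rw [hγAC a hamem, hγAC b hbmem, ← hadd]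
    ring
  -- γ is monotone on good intervals
  have hmono : ∀ a b : ℝ, 0 ≤ a → a ≤ b → b < T →
      (∀ s ∈ Set.Icc a b, G s ≤ 101*C ∧ 9999*(n:ℝ)*C^2 ≤ γ s) → γ a ≤ γ b := by
    intro a b ha hab hbT hgood
    have hiab : IntervalIntegrable γ' volume a b :=
      (hγint b ⟨ha.trans hab, hbT⟩).mono_set
        (Set.uIcc_subset_uIcc (Set.mem_uIcc.mpr (Or.inl ⟨ha, hab⟩)) Set.right_mem_uIcc)
    have hae : ∀ᵐ s ∂(volume.restrict (Set.Icc a b)), 0 ≤ γ' s := by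
      rw [ae_restrict_iff' measurableSet_Icc]
      filter_upwards [hγ'] with s hs hsab
      have hsm : s ∈ Set.Ico (0:ℝ) T := ⟨ha.trans hsab.1, lt_of_le_of_lt hsab.2 hbT⟩
      obtain ⟨hG101, hγ99⟩ := hgood s hsab
      exact aux_gamma' C (n:ℝ) (G s) (γ s) (γ' s) hC hm hG101 (by linarith [hγ99]) (hs hsm)
    have h0 : 0 ≤ ∫ s in a..b, γ' s :=
      intervalIntegral.integral_nonneg_of_ae_restrict hab (hae.mono fun s h => h)
    rw [hdiffγ a b ha hab hbT]
    linarith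
  -- G decreases on intervals where it is large
  have hGdec : ∀ a b : ℝ, 0 ≤ a → a ≤ b → b < T →
      (∀ s ∈ Set.Icc a b, 99*C ≤ G s ∧ G s ≤ 101*C ∧ 9999*(n:ℝ)*C^2 ≤ γ s) →
      G b ≤ G a - (C/2)*(b - a) := by
    intro a b ha hab hbT hgood
    have hiab : IntervalIntegrable g volume a b :=
      (hGint b ⟨ha.trans hab, hbT⟩).mono_set
        (Set.uIcc_subset_uIcc (Set.mem_uIcc.mpr (Or.inl ⟨ha, hab⟩)) Set.right_mem_uIcc)
    have hae : ∀ᵐ s ∂(volume.restrict (Set.Icc a b)), g s ≤ -C/2 := by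
      rw [ae_restrict_iff' measurableSet_Icc]
      filter_upwards [hg] with s hs hsab
      have hsm : s ∈ Set.Ico (0:ℝ) T := ⟨ha.trans hsab.1, lt_of_le_of_lt hsab.2 hbT⟩
      obtain ⟨h99, h101, hγ99⟩ := hgood s hsab
      calc g s ≤ (-1 / 10 + 2 * C / γ s) * G s + C
          + 8 * n * C * (G s) ^ 2 * (1 / γ s + 1 / (γ s) ^ 2) := hs hsm
        _ ≤ -C/2 := by
            have := aux_gbound C (n:ℝ) (G s) (γ s) hC hm h99 h101 hγ99
            linarith [this]
    have hle : (∫ s in a..b, g s) ≤ ∫ _ in a..b, (-C/2 : ℝ) :=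
      intervalIntegral.integral_mono_ae_restrict hab hiab intervalIntegrable_const (hae.mono fun s h => h)
    rw [intervalIntegral.integral_const, smul_eq_mul] at hle
    rw [hdiffG a b ha hab hbT]
    linarith
  -- main contradiction argument
  by_contra hcon
  push_neg at hcon
  obtain ⟨τ₀, hτ₀, hbad₀⟩ := hcon
  set B : Set ℝ := {τ | τ ∈ Set.Ico (0:ℝ) T ∧ ¬ (G τ < 100*C ∧ γ 0 ≤ γ τ)} with hBdef
  have hBne : B.Nonempty := ⟨τ₀, hτ₀, fun ⟨h1', h2'⟩ => absurd h2' (not_le.mpr (hbad₀ h1'))⟩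
  have hBbd : BddBelow B := ⟨0, fun x hx => hx.1.1⟩
  set t := sInf B with htdef
  have ht0 : 0 ≤ t := le_csInf hBne fun x hx => hx.1.1
  have hτB : τ₀ ∈ B := ⟨hτ₀, fun ⟨h1', h2'⟩ => absurd h2' (not_le.mpr (hbad₀ h1'))⟩
  have htT : t < T := lt_of_le_of_lt (csInf_le hBbd hτB) hτ₀.2
  have htmem : t ∈ Set.Ico (0:ℝ) T := ⟨ht0, htT⟩
  have hPlt : ∀ s, 0 ≤ s → s < t → G s < 100*C ∧ γ 0 ≤ γ s := by
    intro s hs0 hst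
    by_contra hP
    exact absurd (csInf_le hBbd ⟨⟨hs0, hst.trans htT⟩, hP⟩) (not_le.mpr hst)
  -- Step A: limits from the left at t
  have hγt : γ 0 ≤ γ t := by
    rcases eq_or_lt_of_le ht0 with h0 | h0
    · rw [← h0]
    · have hne : (𝓝[Set.Ico 0 t] t).NeBot := by
        rw [← mem_closure_iff_nhdsWithin_neBot, closure_Ico h0.ne]
        exact ⟨ht0, le_refl t⟩
      have htend : Filter.Tendsto γ (𝓝[Set.Ico 0 t] t) (𝓝 (γ t)) :=
        (hγcont t htmem).mono (Set.Ico_subset_Ico le_rfl htT.le)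
      exact ge_of_tendsto htend (Filter.eventually_of_mem self_mem_nhdsWithin
        fun s hs => (hPlt s hs.1 hs.2).2)
  have hGt : G t ≤ 100*C := by
    rcases eq_or_lt_of_le ht0 with h0 | h0
    · rw [← h0]; exact hG0.le
    · have hne : (𝓝[Set.Ico 0 t] t).NeBot := by
        rw [← mem_closure_iff_nhdsWithin_neBot, closure_Ico h0.ne]
        exact ⟨ht0, le_refl t⟩
      have htend : Filter.Tendsto G (𝓝[Set.Ico 0 t] t) (𝓝 (G t)) :=
        (hGcont t htmem).mono (Set.Ico_subset_Ico le_rfl htT.le)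
      exact le_of_tendsto htend (Filter.eventually_of_mem self_mem_nhdsWithin
        fun s hs => (hPlt s hs.1 hs.2).1.le)
  -- Step B: rule out G t = 100*C
  have hGtlt : G t < 100*C := by
    by_contra hge
    push_neg at hge
    have h0 : 0 < t := by
      rcases eq_or_lt_of_le ht0 with h0 | h0
      · rw [← h0] at hge; linarith
      · exact h0
    have hGteq : G t = 100*C := le_antisymm hGt hge
    obtain ⟨δ, hδ0, hδ⟩ := Metric.tendsto_nhdsWithin_nhds.mp (hGcont t htmem) C hC0
    set a := max 0 (t - δ/2) with hadef
    have ha0 : 0 ≤ a := le_max_left _ _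
    have hat : a < t := max_lt h0 (by linarith)
    have hsub : ∀ s ∈ Set.Icc a t, 99*C ≤ G s ∧ G s ≤ 101*C ∧ 9999*(n:ℝ)*C^2 ≤ γ s := by
      intro s hs
      have hs0 : 0 ≤ s := ha0.trans hs.1
      have hsT : s < T := lt_of_le_of_lt hs.2 htT
      have hdist : dist s t < δ := by
        rw [Real.dist_eq, abs_lt]
        have hta : t - δ/2 ≤ a := le_max_right _ _
        exact ⟨by linarith [hs.1], by linarith [hs.2, hδ0]⟩
      have hG := hδ ⟨hs0, hsT⟩ hdist
      rw [Real.dist_eq, abs_lt, hGteq] at hG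
      have hγs : γ 0 ≤ γ s := by
        rcases lt_or_eq_of_le hs.2 with hlt | heq
        · exact (hPlt s hs0 hlt).2
        · rw [heq]; exact hγt
      exact ⟨by linarith [hG.1], by linarith [hG.2], by linarith [hγs, hγ0, h1]⟩
    have hdec := hGdec a t ha0 hat.le htT hsub
    have hGa : G a < 100*C := (hPlt a ha0 hat).1
    nlinarith [hdec, hGa, mul_pos (half_pos hC0) (sub_pos.mpr hat)]
  -- Step C: forward propagation past t
  set ε := min C (100*C - G t) with hεdef
  have hε0 : 0 < ε := lt_min hC0 (by linarith)
  obtain ⟨δ₁, hδ₁0, hδ₁⟩ := Metric.tendsto_nhdsWithin_nhds.mp (hGcont t htmem) ε hε0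
  obtain ⟨δ₂, hδ₂0, hδ₂⟩ := Metric.tendsto_nhdsWithin_nhds.mp (hγcont t htmem) 1 one_pos
  set h := min (min δ₁ δ₂ / 2) ((T - t)/2) with hhdef
  have hh0 : 0 < h := lt_min (by positivity) (by linarith)
  have hfor : ∀ s, t ≤ s → s ≤ t + h →
      s ∈ Set.Ico (0:ℝ) T ∧ G s < 100*C ∧ G s ≤ 101*C ∧ 9999*(n:ℝ)*C^2 ≤ γ s := by
    intro s hts hsth
    have hhT : h ≤ (T - t)/2 := min_le_right _ _
    have hsT : s < T := by linarith
    have hsm : s ∈ Set.Ico (0:ℝ) T := ⟨ht0.trans hts, hsT⟩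
    have h1' : h ≤ min δ₁ δ₂ / 2 := min_le_left _ _
    have h2' : min δ₁ δ₂ ≤ δ₁ := min_le_left _ _
    have h3' : min δ₁ δ₂ ≤ δ₂ := min_le_right _ _
    have hd1 : dist s t < δ₁ := by
      rw [Real.dist_eq, abs_lt]; exact ⟨by linarith, by linarith⟩
    have hd2 : dist s t < δ₂ := by
      rw [Real.dist_eq, abs_lt]; exact ⟨by linarith, by linarith⟩
    have hGs := hδ₁ hsm hd1
    have hγs := hδ₂ hsm hd2
    rw [Real.dist_eq, abs_lt] at hGs hγs
    have hεC : ε ≤ C := min_le_left _ _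
    have hεG : ε ≤ 100*C - G t := min_le_right _ _
    exact ⟨hsm, by linarith [hGs.2], by linarith [hGs.2, hGt],
      by linarith [hγs.1, hγt, hγ0, h1]⟩
  have hPall : ∀ s, t ≤ s → s ≤ t + h → G s < 100*C ∧ γ 0 ≤ γ s := by
    intro s hts hsth
    obtain ⟨hsm, hlt, _, _⟩ := hfor s hts hsth
    refine ⟨hlt, ?_⟩
    have hms := hmono t s ht0 hts hsm.2
      (fun u hu => ⟨(hfor u hu.1 (hu.2.trans hsth)).2.2.1, (hfor u hu.1 (hu.2.trans hsth)).2.2.2⟩)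
    linarith [hγt]
  obtain ⟨b, hbB, hblt⟩ := exists_lt_of_csInf_lt hBne (show sInf B < t + h by rw [← htdef]; linarith)
  have htb : t ≤ b := csInf_le hBbd hbB
  exact hbB.2 (hPall b htb hblt.le)
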